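/- Let 0 ≤ r₁ < r₂ ≤ 1 and n ≥ 2, and define the deterministic allocation on quantile profiles (q₁,…,qₙ) ∈ [0,1]ⁿ: buyer j wins iff j is the smallest index attaining max{qᵢ : qᵢ > r₂} when that set is nonempty; if no qᵢ > r₂ and some qᵢ ∈ [r₁, r₂], the smallest-index maximal such buyer wins; otherwise no one wins. Then each buyer's induced interim allocation (against i.i.d. uniform quantiles of opponents) is x̂ᵢ(q) = 0 for q < r₁, x̂ᵢ(q) = q^{n-1} for r₁ ≤ q ≤ r₂, and ∑ᵢ x̂ᵢ(q) = (1 - r₂ⁿ)/(1 - r₂) for q > r₂ (namely x̂ᵢ(q) = r₂^{i-1} for q > r₂). -/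

import Mathlib

open MeasureTheory

/-- Buyer `i` wins under the hierarchical deterministic rule for Condition 2
piecewise auctions: if some quantile exceeds `r₂`, the smallest such index wins;
otherwise, if some quantile lies in `[r₁, r₂]`, the smallest-index maximal such
buyer wins; otherwise no one wins. -/
def winsRule (n : ℕ) (r₁ r₂ : ℝ) (q : Fin n → ℝ) (i : Fin n) : Prop :=
  (r₂ < q i ∧ ∀ j, j < i → q j ≤ r₂) ∨
  ((∀ j, q j ≤ r₂) ∧ r₁ ≤ q i ∧
    ∀ j, j ≠ i → r₁ ≤ q j → (q j < q i ∨ (q j = q i ∧ i < j)))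

open Classical in
/-- Interim allocation of buyer `i` at own quantile `q`, with the other buyers'
quantiles i.i.d. uniform on `[0,1]`. -/
noncomputable def interimAlloc (n : ℕ) (r₁ r₂ : ℝ) (i : Fin n) (q : ℝ) : ℝ :=
  ∫ v, (if winsRule n r₁ r₂ (Function.update v i q) i then (1:ℝ) else 0)
    ∂(Measure.pi fun _ : Fin n => volume.restrict (Set.Icc (0:ℝ) 1))

noncomputable def nu : Measure ℝ := volume.restrict (Set.Icc (0:ℝ) 1)

lemma nu_univ : nu Set.univ = 1 := by
  simp [nu, Real.volume_Icc]

lemma nu_Iio {q : ℝ} (h1 : q ≤ 1) : nu (Set.Iio q) = ENNReal.ofReal q := by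
  rw [nu, Measure.restrict_apply measurableSet_Iio]
  have h : Set.Iio q ∩ Set.Icc 0 1 = Set.Ico 0 q := by
    ext x
    simp only [Set.mem_inter_iff, Set.mem_Iio, Set.mem_Icc, Set.mem_Ico]
    constructor
    · rintro ⟨h, h2, _⟩; exact ⟨h2, h⟩
    · rintro ⟨h2, h⟩; exact ⟨h, h2, h.le.trans h1⟩
  rw [h, Real.volume_Ico, sub_zero]

lemma nu_Iic {q : ℝ} (h1 : q ≤ 1) : nu (Set.Iic q) = ENNReal.ofReal q := by
  rw [nu, Measure.restrict_apply measurableSet_Iic]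
  have h : Set.Iic q ∩ Set.Icc 0 1 = Set.Icc 0 q := by
    ext x
    simp only [Set.mem_inter_iff, Set.mem_Iic, Set.mem_Icc]
    constructor
    · rintro ⟨h, h2, _⟩; exact ⟨h2, h⟩
    · rintro ⟨h2, h⟩; exact ⟨h, h2, h.trans h1⟩
  rw [h, Real.volume_Icc, sub_zero]

instance : SigmaFinite nu := by unfold nu; infer_instance

open Classical in
lemma interim_eq {n : ℕ} (r₁ r₂ : ℝ) (i : Fin n) (q : ℝ) (s : Fin n → Set ℝ)
    (hs : ∀ j, MeasurableSet (s j))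
    (h : ∀ v : Fin n → ℝ, winsRule n r₁ r₂ (Function.update v i q) i ↔ v ∈ Set.univ.pi s) :
    interimAlloc n r₁ r₂ i q = (∏ j, nu (s j)).toReal := by
  unfold interimAlloc
  have heq : ∀ v : Fin n → ℝ, (if winsRule n r₁ r₂ (Function.update v i q) i then (1:ℝ) else 0)
      = (Set.univ.pi s).indicator 1 v := by
    intro v
    rw [Set.indicator_apply]
    by_cases hv : v ∈ Set.univ.pi s
    · rw [if_pos ((h v).mpr hv), if_pos hv]; rfl
    · rw [if_neg (fun hw => hv ((h v).mp hw)), if_neg hv]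
  simp_rw [heq]
  have : (Measure.pi fun _ : Fin n => volume.restrict (Set.Icc (0:ℝ) 1))
      = Measure.pi fun _ : Fin n => nu := rfl
  rw [this, integral_indicator_one (MeasurableSet.univ_pi hs), measureReal_def, Measure.pi_pi]

/-- Deterministic implementation of Condition 2 piecewise auctions: the induced
interim allocations are `0` below `r₁`, `q^{n-1}` on `[r₁, r₂]`, and `r₂^{i-1}`
above `r₂`, summing there to `(1 - r₂ⁿ)/(1 - r₂)`. -/
theorem condition2_deterministic_implementation
    (n : ℕ) (hn : 2 ≤ n) (r₁ r₂ : ℝ)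
    (h0 : 0 ≤ r₁) (h12 : r₁ < r₂) (h21 : r₂ ≤ 1) :
    (∀ i : Fin n, ∀ q ∈ Set.Icc (0:ℝ) 1,
      (q < r₁ → interimAlloc n r₁ r₂ i q = 0) ∧
      (r₁ ≤ q → q ≤ r₂ → interimAlloc n r₁ r₂ i q = q ^ (n - 1)) ∧
      (r₂ < q → interimAlloc n r₁ r₂ i q = r₂ ^ (i : ℕ))) ∧
    (∀ q ∈ Set.Icc (0:ℝ) 1, r₂ < q →
      (∑ i : Fin n, interimAlloc n r₁ r₂ i q) = (1 - r₂ ^ n) / (1 - r₂)) := by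
  classical
  -- low case
  have low : ∀ (i : Fin n) (q : ℝ), q < r₁ → interimAlloc n r₁ r₂ i q = 0 := by
    intro i q hq
    have hw : ∀ v : Fin n → ℝ, ¬ winsRule n r₁ r₂ (Function.update v i q) i := by
      intro v hw
      rcases hw with ⟨h1, _⟩ | ⟨_, h2, _⟩
      · rw [Function.update_self] at h1
        exact absurd h1 (not_lt.mpr ((hq.trans h12).le))
      · rw [Function.update_self] at h2
        exact absurd h2 (not_le.mpr hq)
    unfold interimAlloc
    simp [hw]
  -- middle case
  have mid : ∀ (i : Fin n) (q : ℝ), 0 ≤ q → r₁ ≤ q → q ≤ r₂ →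
      interimAlloc n r₁ r₂ i q = q ^ (n - 1) := by
    intro i q hq0 hq1 hq2
    set s : Fin n → Set ℝ :=
      fun j => if j = i then Set.univ else if j < i then Set.Iio q else Set.Iic q with hsdef
    have hs : ∀ j, MeasurableSet (s j) := by
      intro j
      simp only [hsdef]
      split
      · exact MeasurableSet.univ
      · split
        · exact measurableSet_Iio
        · exact measurableSet_Iic
    have hiff : ∀ v : Fin n → ℝ,
        winsRule n r₁ r₂ (Function.update v i q) i ↔ v ∈ Set.univ.pi s := by
      intro v
      constructor
      · rintro (⟨h1, _⟩ | ⟨hall, _, hmax⟩)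
        · rw [Function.update_self] at h1
          exact absurd hq2 (not_le.mpr h1)
        · intro j _
          simp only [hsdef]
          by_cases hji : j = i
          · simp [hji]
          · rw [if_neg hji]
            have huj : Function.update v i q j = v j := Function.update_of_ne hji _ _
            by_cases hr : r₁ ≤ v j
            · have := hmax j hji (by rw [huj]; exact hr)
              rw [huj, Function.update_self] at this
              rcases this with h | ⟨h, hij⟩
              · split
                · exact h
                · exact h.le
              · split
                · rename_i hlt
                  exact absurd hij (not_lt.mpr hlt.le)
                · exact h.le
            · have : v j < q := lt_of_lt_of_le (not_le.mp hr) hq1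
              split
              · exact this
              · exact this.le
      · intro hv
        right
        have hkey : ∀ j, j ≠ i → (if j < i then v j < q else v j ≤ q) := by
          intro j hji
          have := hv j (Set.mem_univ j)
          simp only [hsdef, if_neg hji] at this
          by_cases hlt : j < i
          · rw [if_pos hlt] at this ⊢; exact this
          · rw [if_neg hlt] at this ⊢; exact this
        refine ⟨?_, ?_, ?_⟩
        · intro j
          by_cases hji : j = i
          · rw [hji, Function.update_self]; exact hq2
          · rw [Function.update_of_ne hji]
            have := hkey j hji
            split at this
            · exact (this.le).trans hq2
            · exact this.trans hq2
        · rw [Function.update_self]; exact hq1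
        · intro j hji _
          rw [Function.update_of_ne hji, Function.update_self]
          have := hkey j hji
          split at this
          · exact Or.inl this
          · rcases lt_or_eq_of_le this with h | h
            · exact Or.inl h
            · refine Or.inr ⟨h, ?_⟩
              rename_i hnlt
              exact lt_of_le_of_ne (not_lt.mp hnlt) (Ne.symm hji)
    rw [interim_eq r₁ r₂ i q s hs hiff]
    have hprod : ∏ j, nu (s j) = ENNReal.ofReal q ^ (n - 1) := by
      have hval : ∀ j, nu (s j) = if j = i then 1 else ENNReal.ofReal q := by
        intro j
        simp only [hsdef]
        by_cases hji : j = i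
        · simp [hji, nu_univ]
        · rw [if_neg hji, if_neg hji]
          split
          · exact nu_Iio (hq2.trans h21)
          · exact nu_Iic (hq2.trans h21)
      calc ∏ j, nu (s j) = ∏ j, (if j = i then 1 else ENNReal.ofReal q) :=
            Finset.prod_congr rfl (fun j _ => hval j)
        _ = (if i = i then 1 else ENNReal.ofReal q)
            * ∏ j ∈ Finset.univ.erase i, (if j = i then 1 else ENNReal.ofReal q) :=
            (Finset.mul_prod_erase _ _ (Finset.mem_univ i)).symm
        _ = ∏ j ∈ Finset.univ.erase i, ENNReal.ofReal q := by
            rw [if_pos rfl, one_mul]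
            exact Finset.prod_congr rfl (fun j hj => if_neg (Finset.ne_of_mem_erase hj))
        _ = ENNReal.ofReal q ^ (n - 1) := by
            rw [Finset.prod_const, Finset.card_erase_of_mem (Finset.mem_univ i),
              Finset.card_univ, Fintype.card_fin]
    rw [hprod, ENNReal.toReal_pow, ENNReal.toReal_ofReal hq0]
  -- high case
  have high : ∀ (i : Fin n) (q : ℝ), r₂ < q →
      interimAlloc n r₁ r₂ i q = r₂ ^ (i : ℕ) := by
    intro i q hq
    set s : Fin n → Set ℝ := fun j => if j < i then Set.Iic r₂ else Set.univ with hsdef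
    have hs : ∀ j, MeasurableSet (s j) := by
      intro j
      simp only [hsdef]
      split
      · exact measurableSet_Iic
      · exact MeasurableSet.univ
    have hiff : ∀ v : Fin n → ℝ,
        winsRule n r₁ r₂ (Function.update v i q) i ↔ v ∈ Set.univ.pi s := by
      intro v
      constructor
      · rintro (⟨_, h2⟩ | ⟨hall, _, _⟩)
        · intro j _
          simp only [hsdef]
          split
          · rename_i hji
            have := h2 j hji
            rwa [Function.update_of_ne (ne_of_lt hji)] at this
          · exact Set.mem_univ _
        · have := hall i
          rw [Function.update_self] at this
          exact absurd this (not_le.mpr hq)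
      · intro hv
        left
        refine ⟨by rw [Function.update_self]; exact hq, ?_⟩
        intro j hji
        rw [Function.update_of_ne (ne_of_lt hji)]
        have := hv j (Set.mem_univ j)
        simpa only [hsdef, if_pos hji, Set.mem_Iic] using this
    rw [interim_eq r₁ r₂ i q s hs hiff]
    have hcard : (Finset.univ.filter (fun j : Fin n => j < i)).card = (i : ℕ) := by
      have : Finset.univ.filter (fun j : Fin n => j < i) = Finset.Iio i := by
        ext j; simp
      rw [this, Fin.card_Iio]
    have hprod : ∏ j, nu (s j) = ENNReal.ofReal r₂ ^ (i : ℕ) := by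
      have hval : ∀ j, nu (s j) = if j < i then ENNReal.ofReal r₂ else 1 := by
        intro j
        simp only [hsdef]
        split
        · exact nu_Iic h21
        · exact nu_univ
      calc ∏ j, nu (s j) = ∏ j, (if j < i then ENNReal.ofReal r₂ else 1) :=
            Finset.prod_congr rfl (fun j _ => hval j)
        _ = ENNReal.ofReal r₂ ^ (i : ℕ) := by
            rw [Finset.prod_ite, Finset.prod_const, Finset.prod_const, one_pow, mul_one, hcard]
    rw [hprod, ENNReal.toReal_pow, ENNReal.toReal_ofReal (h0.trans h12.le)]
  refine ⟨fun i q hq => ⟨low i q, fun h1 h2 => mid i q hq.1 h1 h2, high i q⟩, ?_⟩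
  intro q hq hr2q
  have hne : r₂ ≠ 1 := ne_of_lt (lt_of_lt_of_le hr2q hq.2)
  have : (∑ i : Fin n, interimAlloc n r₁ r₂ i q) = ∑ i : Fin n, r₂ ^ (i : ℕ) :=
    Finset.sum_congr rfl (fun i _ => high i q hr2q)
  rw [this, Fin.sum_univ_eq_sum_range (fun k => r₂ ^ k) n, geom_sum_eq hne]
  rw [div_eq_div_iff (sub_ne_zero.mpr hne) (sub_ne_zero.mpr (Ne.symm hne))]
  ring
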